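/- Acyclicity for the π-calculus: for every finitary monadic π-term P, the translation ⟦P⟧ = (νv)(⟦P⟧_v | C(v)) is an acyclic solos term, i.e., it satisfies conditions (AC1)–(AC5). -/

import Mathlib

/-- Communication protocols carried by object occurrences: Send and Receive. -/
inductive Proto : Type
  | S : Proto
  | R : Proto
deriving DecidableEq

/-- A (protocol-decorated) triadic solo: a polarity (`inp = true` for input),
a subject name and three object names each decorated with a protocol. -/
structure Solo where
  inp : Bool
  subj : ℕ
  objs : Fin 3 → ℕ × Proto
deriving DecidableEq

/-- A solos term in canonical form: a finite set of restricted (bound) names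
together with a multiset of solos in parallel. -/
structure CTerm where
  bound : Finset ℕ
  solos : Multiset Solo

/-- `x` has an object occurrence in `s`. -/
def Solo.objOcc (s : Solo) (x : ℕ) : Prop := ∃ i, (s.objs i).1 = x

/-- `x` has an `R`-occurrence in `s` (written `s ◁ x`). -/
def Solo.hasR (s : Solo) (x : ℕ) : Prop := ∃ i, s.objs i = (x, Proto.R)

/-- `x` has an `S`-occurrence in `s`. -/
def Solo.hasS (s : Solo) (x : ℕ) : Prop := ∃ i, s.objs i = (x, Proto.S)

/-- `s ◁ t` : the subject of `t` has an `R`-occurrence in `s`. -/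
def Solo.ltS (s t : Solo) : Prop := s.hasR t.subj

/-- Dual solos: same subject, opposite polarities. -/
def Dual (s t : Solo) : Prop := s.subj = t.subj ∧ s.inp ≠ t.inp

/-- `s` is a root of `P`: no solo `t` of `P` satisfies `t ◁ s`. -/
def CTerm.IsRoot (P : CTerm) (s : Solo) : Prop := ∀ t ∈ P.solos, ¬ t.ltS s

/-- The relation `◁` restricted to the solos of `P`. -/
def CTerm.lt (P : CTerm) (s t : Solo) : Prop :=
  s ∈ P.solos ∧ t ∈ P.solos ∧ s.ltS t

/-- The number of `R`-occurrences of the name `x` in `P`. -/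
def CTerm.Rocc (P : CTerm) (x : ℕ) : ℕ :=
  (P.solos.map
    (fun s => (Finset.univ.filter (fun i => s.objs i = (x, Proto.R))).card)).sum

/-- (AC1): each name has at most one `R`-occurrence. -/
def AC1 (P : CTerm) : Prop := ∀ x : ℕ, P.Rocc x ≤ 1

/-- (AC2): two dual solos are both roots. -/
def AC2 (P : CTerm) : Prop :=
  ∀ s ∈ P.solos, ∀ t ∈ P.solos, Dual s t → P.IsRoot s ∧ P.IsRoot t

/-- (AC3): `s ◁ x` and `x` occurring as object in `t` implies `s ◁* t`. -/
def AC3 (P : CTerm) : Prop :=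
  ∀ s ∈ P.solos, ∀ t ∈ P.solos, ∀ x : ℕ,
    s.hasR x → t.objOcc x → Relation.ReflTransGen P.lt s t

/-- (AC4): a solo with both an `S`- and an `R`-occurrence of a name is an input. -/
def AC4 (P : CTerm) : Prop :=
  ∀ s ∈ P.solos, ∀ x : ℕ, s.hasS x → s.hasR x → s.inp = true

/-- (AC5): no free name has an `R`-occurrence. -/
def AC5 (P : CTerm) : Prop :=
  ∀ x : ℕ, x ∉ P.bound → ∀ s ∈ P.solos, ¬ s.hasR x

/-- Acyclic solos terms: conditions (AC1)–(AC5). -/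
def Acyclic (P : CTerm) : Prop := AC1 P ∧ AC2 P ∧ AC3 P ∧ AC4 P ∧ AC5 P

/-- Applying a name substitution to a solo (protocols are preserved). -/
def applySub (σ : ℕ → ℕ) (s : Solo) : Solo :=
  ⟨s.inp, σ s.subj, fun i => (σ (s.objs i).1, (s.objs i).2)⟩

/-- `MguData σ s0 t0 P` : `σ` is a most general unifier of the objects of the
dual solos `s0` and `t0`, modifying only bound names of `P`. -/
def MguData (σ : ℕ → ℕ) (s0 t0 : Solo) (P : CTerm) : Prop :=
  (∀ i, σ (s0.objs i).1 = σ (t0.objs i).1) ∧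
  (∀ w, σ w ≠ w → w ∈ P.bound) ∧
  (∀ w, σ (σ w) = σ w) ∧
  (∀ τ : ℕ → ℕ, (∀ i, τ (s0.objs i).1 = τ (t0.objs i).1) → ∀ w, τ (σ w) = τ w)

/-- One reduction step of the solos calculus in canonical form: two dual solos
`s0` and `t0` of `P` are erased and a most general unifier of their objects,
modifying only bound names, is applied to the remaining solos (the residues). -/
def Reduces (P Q : CTerm) : Prop :=
  ∃ (s0 t0 : Solo) (σ : ℕ → ℕ),
    s0 ∈ P.solos ∧ t0 ∈ P.solos.erase s0 ∧ Dual s0 t0 ∧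
    MguData σ s0 t0 P ∧
    Q.solos = ((P.solos.erase s0).erase t0).map (applySub σ) ∧
    Q.bound = P.bound.filter (fun w => σ w = w)

/-- Finitary monadic π-terms: `0`, input prefix `u(x).P`, output prefix
`ū⟨x⟩.P`, parallel composition and restriction `(νx)P`. -/
inductive Pi : Type
  | nil : Pi
  | inp (u x : ℕ) (P : Pi) : Pi
  | out (u x : ℕ) (P : Pi) : Pi
  | par (P Q : Pi) : Pi
  | nu (x : ℕ) (P : Pi) : Pi

/-- Free names of a π-term. -/
def Pi.fn : Pi → Finset ℕ
  | .nil => ∅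
  | .inp u x P => insert u (P.fn.erase x)
  | .out u x P => insert u (insert x P.fn)
  | .par P Q => P.fn ∪ Q.fn
  | .nu x P => P.fn.erase x

/-- All names (free or bound) occurring in a π-term. -/
def Pi.names : Pi → Finset ℕ
  | .nil => ∅
  | .inp u x P => insert u (insert x P.names)
  | .out u x P => insert u (insert x P.names)
  | .par P Q => P.names ∪ Q.names
  | .nu x P => insert x P.names

/-- Bound names of a π-term. -/
def Pi.bn : Pi → Finset ℕ
  | .nil => ∅
  | .inp _ x P => insert x P.bn
  | .out _ _ P => P.bn
  | .par P Q => P.bn ∪ Q.bn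
  | .nu x P => insert x P.bn

/-- A π-term has `Good` names when its binders are pairwise distinct and do not
clash across parallel components (names "as different as possible", obtainable
by α-conversion). -/
def Pi.Good : Pi → Prop
  | .nil => True
  | .inp _ x P => P.Good ∧ x ∉ P.bn
  | .out _ _ P => P.Good
  | .par P Q => P.Good ∧ Q.Good ∧ Disjoint P.bn Q.bn ∧
      Disjoint P.bn Q.fn ∧ Disjoint Q.bn P.fn
  | .nu x P => P.Good ∧ x ∉ P.bn

/-- The decorated translation of the catalyst `C(v) = (νz) v(z^R z^S v^S)`. -/
def catSolo (v z : ℕ) : Solo := ⟨true, v, ![(z, Proto.R), (z, Proto.S), (v, Proto.S)]⟩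

/-- The protocol-decorated translation `⟦P⟧_v` of a π-term into a canonical
solos term, using a counter `c` as supply of fresh names (the translation
returns the term together with the next value of the counter):
`⟦u(x).P⟧_v = (νw)(νy)( v̄(u^S w^R y^R) | C(y) | (νx)(νv')( w(x^R v^S v'^R) | ⟦P⟧_{v'} ))`,
`⟦ū⟨x⟩.P⟧_v = (νw)(νy)( v̄(u^S w^R y^R) | C(y) | (νv')( w̄(x^S v'^R v^S) | ⟦P⟧_{v'} ))`,
and homomorphically for `0`, parallel composition and restriction. -/
def dtrans : Pi → ℕ → ℕ → CTerm × ℕ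
  | .nil, _, c => (⟨∅, 0⟩, c)
  | .inp u x P, v, c =>
      let w := c; let y := c + 1; let z := c + 2; let v' := c + 3
      let r := dtrans P v' (c + 4)
      (⟨insert w (insert y (insert z (insert x (insert v' r.1.bound)))),
        (⟨false, v, ![(u, Proto.S), (w, Proto.R), (y, Proto.R)]⟩ : Solo) ::ₘ
          catSolo y z ::ₘ
          (⟨true, w, ![(x, Proto.R), (v, Proto.S), (v', Proto.R)]⟩ : Solo) ::ₘ
          r.1.solos⟩, r.2)
  | .out u x P, v, c =>
      let w := c; let y := c + 1; let z := c + 2; let v' := c + 3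
      let r := dtrans P v' (c + 4)
      (⟨insert w (insert y (insert z (insert v' r.1.bound))),
        (⟨false, v, ![(u, Proto.S), (w, Proto.R), (y, Proto.R)]⟩ : Solo) ::ₘ
          catSolo y z ::ₘ
          (⟨false, w, ![(x, Proto.S), (v', Proto.R), (v, Proto.S)]⟩ : Solo) ::ₘ
          r.1.solos⟩, r.2)
  | .par P Q, v, c =>
      let a := dtrans P v c
      let b := dtrans Q v a.2
      (⟨a.1.bound ∪ b.1.bound, a.1.solos + b.1.solos⟩, b.2)
  | .nu x P, v, c =>
      let a := dtrans P v c
      (⟨insert x a.1.bound, a.1.solos⟩, a.2)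

/-- The decorated translation `⟦P⟧ = (νv)(⟦P⟧_v | C(v))` of a π-term, the fresh
names being taken above the counter `c`. -/
def dtransTop (P : Pi) (c : ℕ) : CTerm :=
  let v := c; let z := c + 1
  let a := (dtrans P v (c + 2)).1
  ⟨insert v (insert z a.bound), catSolo v z ::ₘ a.solos⟩

lemma exists_fin3 {q : Fin 3 → Prop} : (∃ i, q i) ↔ q 0 ∨ q 1 ∨ q 2 := by
  constructor
  · rintro ⟨i, h⟩; fin_cases i <;> tauto
  · rintro (h | h | h) <;> exact ⟨_, h⟩

lemma hasR_mk {b : Bool} {sub : ℕ} {p q r : ℕ × Proto} {n : ℕ} :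
    (Solo.mk b sub ![p,q,r]).hasR n ↔ p = (n, .R) ∨ q = (n, .R) ∨ r = (n, .R) := by
  simp [Solo.hasR, exists_fin3]

lemma hasS_mk {b : Bool} {sub : ℕ} {p q r : ℕ × Proto} {n : ℕ} :
    (Solo.mk b sub ![p,q,r]).hasS n ↔ p = (n, .S) ∨ q = (n, .S) ∨ r = (n, .S) := by
  simp [Solo.hasS, exists_fin3]

lemma objOcc_mk {b : Bool} {sub : ℕ} {p q r : ℕ × Proto} {n : ℕ} :
    (Solo.mk b sub ![p,q,r]).objOcc n ↔ p.1 = n ∨ q.1 = n ∨ r.1 = n := by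
  simp [Solo.objOcc, exists_fin3]

def cnt (s : Solo) (x : ℕ) : ℕ :=
  (Finset.univ.filter (fun i => s.objs i = (x, Proto.R))).card

lemma cnt_mk (b : Bool) (sub : ℕ) (p q r : ℕ × Proto) (x : ℕ) :
    cnt ⟨b, sub, ![p,q,r]⟩ x = (if p = (x,Proto.R) then 1 else 0) +
      (if q = (x,Proto.R) then 1 else 0) + (if r = (x,Proto.R) then 1 else 0) := by
  rw [cnt, Finset.card_filter, Fin.sum_univ_three]; simp
  congr

lemma Rocc_cons (b : Finset ℕ) (s : Solo) (m : Multiset Solo) (x : ℕ) :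
    CTerm.Rocc ⟨b, s ::ₘ m⟩ x = cnt s x + CTerm.Rocc ⟨b, m⟩ x := by
  simp [CTerm.Rocc, cnt]

lemma Rocc_eq (b b' : Finset ℕ) (m : Multiset Solo) (x : ℕ) :
    CTerm.Rocc ⟨b, m⟩ x = CTerm.Rocc ⟨b', m⟩ x := rfl

lemma Rocc_add (b b1 b2 : Finset ℕ) (m m' : Multiset Solo) (x : ℕ) :
    CTerm.Rocc ⟨b, m + m'⟩ x = CTerm.Rocc ⟨b1, m⟩ x + CTerm.Rocc ⟨b2, m'⟩ x := by
  simp [CTerm.Rocc]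

lemma hasR_Rocc {b : Finset ℕ} {m : Multiset Solo} {s : Solo} {x : ℕ}
    (hs : s ∈ m) (h : s.hasR x) : CTerm.Rocc ⟨b, m⟩ x ≠ 0 := by
  obtain ⟨i, hi⟩ := h
  have hcnt : cnt s x ≠ 0 := by
    have hmem : i ∈ Finset.univ.filter (fun j => s.objs j = (x, Proto.R)) := by simp [hi]
    intro h0
    rw [cnt, Finset.card_eq_zero] at h0
    simp [h0] at hmem
  intro h0
  rw [CTerm.Rocc, Multiset.sum_eq_zero_iff] at h0
  exact hcnt (h0 _ (Multiset.mem_map.2 ⟨s, hs, rfl⟩))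

lemma rtg_mono {A B : CTerm} (h : ∀ s ∈ A.solos, s ∈ B.solos) {s t : Solo}
    (hst : Relation.ReflTransGen A.lt s t) : Relation.ReflTransGen B.lt s t :=
  by
    induction hst with
    | refl => exact .refl
    | tail _ hbc ih => exact ih.tail ⟨h _ hbc.1, h _ hbc.2.1, hbc.2.2⟩

lemma Pi.bn_subset_names (P : Pi) : P.bn ⊆ P.names := by
  induction P with
  | nil => simp [Pi.bn, Pi.names]
  | inp u x P ih =>
      simp only [Pi.bn, Pi.names]
      exact (Finset.insert_subset_insert _ ih).trans (Finset.subset_insert _ _)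
  | out u x P ih =>
      simp only [Pi.bn, Pi.names]
      exact ih.trans ((Finset.subset_insert _ _).trans (Finset.subset_insert _ _))
  | par P Q ihP ihQ => simp only [Pi.bn, Pi.names]; exact Finset.union_subset_union ihP ihQ
  | nu x P ih => simp only [Pi.bn, Pi.names]; exact Finset.insert_subset_insert _ ih

lemma Pi.names_subset_fn_bn (P : Pi) : P.names ⊆ P.fn ∪ P.bn := by
  induction P with
  | nil => simp [Pi.names]
  | inp u x P ih =>
      simp only [Pi.names, Pi.fn, Pi.bn]
      intro a ha
      simp only [Finset.mem_insert, Finset.mem_union, Finset.mem_erase] at *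
      rcases ha with rfl | rfl | ha
      · tauto
      · tauto
      · rcases Finset.mem_union.1 (ih ha) with h | h
        · by_cases hax : a = x
          · tauto
          · tauto
        · tauto
  | out u x P ih =>
      simp only [Pi.names, Pi.fn, Pi.bn]
      intro a ha
      simp only [Finset.mem_insert, Finset.mem_union] at *
      rcases ha with rfl | rfl | ha
      · tauto
      · tauto
      · rcases Finset.mem_union.1 (ih ha) with h | h <;> tauto
  | par P Q ihP ihQ =>
      simp only [Pi.names, Pi.fn, Pi.bn]
      intro a ha
      simp only [Finset.mem_union] at *
      rcases ha with h | h
      · rcases Finset.mem_union.1 (ihP h) with h | h <;> tauto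
      · rcases Finset.mem_union.1 (ihQ h) with h | h <;> tauto
  | nu x P ih =>
      simp only [Pi.names, Pi.fn, Pi.bn]
      intro a ha
      simp only [Finset.mem_insert, Finset.mem_union, Finset.mem_erase] at *
      rcases ha with rfl | ha
      · tauto
      · rcases Finset.mem_union.1 (ih ha) with h | h
        · by_cases hax : a = x <;> tauto
        · tauto

/-- The big invariant for `dtrans P v c` (with result term `A` and next counter `k`). -/
structure DInv (P : Pi) (v c : ℕ) (A : CTerm) (k : ℕ) : Prop where
  hk : c ≤ k
  hbound : ∀ x, (x ∈ P.bn ∨ (c ≤ x ∧ x < k)) → x ∈ A.bound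
  hR : ∀ s ∈ A.solos, ∀ n, s.hasR n → n ∈ P.bn ∨ (c ≤ n ∧ n < k)
  hobj : ∀ s ∈ A.solos, ∀ n, s.objOcc n → n ∈ P.names ∨ (c ≤ n ∧ n < k) ∨ n = v
  hsubj : ∀ s ∈ A.solos, s.subj = v ∨ (c ≤ s.subj ∧ s.subj < k)
  hv : ∀ s ∈ A.solos, s.subj = v → s.inp = false
  hnd : ∀ s ∈ A.solos, ∀ t ∈ A.solos, ¬ Dual s t
  hr1 : ∀ x, A.Rocc x ≤ 1
  hr0 : ∀ x, A.Rocc x ≠ 0 → x ∈ P.bn ∨ (c ≤ x ∧ x < k)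
  hac4 : ∀ s ∈ A.solos, ∀ n, s.hasS n → s.hasR n → s.inp = true
  hreach : ∀ t ∈ A.solos, ∃ r0 ∈ A.solos, r0.subj = v ∧ Relation.ReflTransGen A.lt r0 t
  hac3 : ∀ s ∈ A.solos, ∀ t ∈ A.solos, ∀ n, s.hasR n → t.objOcc n →
    Relation.ReflTransGen A.lt s t

set_option maxHeartbeats 2000000 in
lemma dinv_dtrans (P : Pi) : ∀ v c : ℕ, P.Good → Disjoint P.bn P.fn →
    (∀ x ∈ P.names, x < c) → v < c → v ∉ P.bn →
    DInv P v c (dtrans P v c).1 (dtrans P v c).2 := by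
  induction P with
  | nil =>
      intro v c _ _ _ _ _
      have hE : dtrans .nil v c = (⟨∅, 0⟩, c) := rfl
      rw [hE]
      refine ⟨le_rfl, ?_, ?_, ?_, ?_, ?_, ?_, ?_, ?_, ?_, ?_, ?_⟩ <;>
        simp [Pi.bn, CTerm.Rocc]
  | inp u x P ih =>
      intro v c hg hd hn hv hvb
      obtain ⟨hgP, hxbn⟩ := hg
      simp only [Pi.bn, Pi.fn] at hd hvb
      have hnP : ∀ y ∈ P.names, y < c := fun y hy => hn y (by simp [Pi.names]; tauto)
      have hu : u < c := hn u (by simp [Pi.names])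
      have hx : x < c := hn x (by simp [Pi.names])
      have hbnP : ∀ y ∈ P.bn, y < c := fun y hy => hnP y (Pi.bn_subset_names P hy)
      have hux : u ∉ insert x P.bn := Finset.disjoint_right.1 hd (Finset.mem_insert_self u _)
      have huxne : u ≠ x := fun h => hux (Finset.mem_insert.2 (Or.inl h))
      have hubn : u ∉ P.bn := fun h => hux (Finset.mem_insert.2 (Or.inr h))
      have hvbn : v ∉ P.bn := fun h => hvb (Finset.mem_insert.2 (Or.inr h))
      have hd' : Disjoint P.bn P.fn := by
        rw [Finset.disjoint_left]
        intro n hb hf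
        have hnx2 : n ≠ x := fun h => hxbn (h ▸ hb)
        exact Finset.disjoint_left.1 hd (Finset.mem_insert.2 (Or.inr hb))
          (Finset.mem_insert.2 (Or.inr (Finset.mem_erase.2 ⟨hnx2, hf⟩)))
      set r := dtrans P (c+3) (c+4) with hrdef
      have IH : DInv P (c+3) (c+4) r.1 r.2 := ih (c+3) (c+4) hgP hd'
        (fun y hy => by have := hnP y hy; omega) (by omega) (fun h => by have := hbnP _ h; omega)
      have hk4 : c + 4 ≤ r.2 := IH.hk
      set s1 : Solo := ⟨false, v, ![(u, Proto.S), (c, Proto.R), (c+1, Proto.R)]⟩ with hs1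
      set s2 : Solo := catSolo (c+1) (c+2) with hs2
      set s3 : Solo := ⟨true, c, ![(x, Proto.R), (v, Proto.S), (c+3, Proto.R)]⟩ with hs3
      show DInv (Pi.inp u x P) v c
        ⟨insert c (insert (c+1) (insert (c+2) (insert x (insert (c+3) r.1.bound)))),
          s1 ::ₘ s2 ::ₘ s3 ::ₘ r.1.solos⟩ r.2
      have hm1 : s1 ∈ s1 ::ₘ s2 ::ₘ s3 ::ₘ r.1.solos := Multiset.mem_cons_self _ _
      have hm2 : s2 ∈ s1 ::ₘ s2 ::ₘ s3 ::ₘ r.1.solos :=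
        Multiset.mem_cons.2 (Or.inr (Multiset.mem_cons_self _ _))
      have hm3 : s3 ∈ s1 ::ₘ s2 ::ₘ s3 ::ₘ r.1.solos :=
        Multiset.mem_cons.2 (Or.inr (Multiset.mem_cons.2 (Or.inr (Multiset.mem_cons_self _ _))))
      have hincl : ∀ s ∈ r.1.solos, s ∈
          (CTerm.mk (insert c (insert (c+1) (insert (c+2) (insert x (insert (c+3) r.1.bound)))))
            (s1 ::ₘ s2 ::ₘ s3 ::ₘ r.1.solos)).solos := by
        intro s hs
        exact Multiset.mem_cons.2 (Or.inr (Multiset.mem_cons.2 (Or.inr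
          (Multiset.mem_cons.2 (Or.inr hs)))))
      refine ⟨by omega, ?_, ?_, ?_, ?_, ?_, ?_, ?_, ?_, ?_, ?_, ?_⟩
      · -- hbound
        intro y hy
        simp only [Pi.bn, Finset.mem_insert] at hy ⊢
        rcases hy with (rfl | h) | h
        · tauto
        · have := IH.hbound y (Or.inl h); tauto
        · by_cases hcase : y < c + 4
          · have : y = c ∨ y = c+1 ∨ y = c+2 ∨ y = c+3 := by omega
            tauto
          · have := IH.hbound y (Or.inr ⟨by omega, h.2⟩); tauto
      · -- hR
        intro s hs n hRn
        simp only [Multiset.mem_cons] at hs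
        simp only [Pi.bn, Finset.mem_insert]
        rcases hs with rfl | rfl | rfl | hs
        · simp [hs1, hasR_mk, Prod.ext_iff] at hRn
          right; omega
        · simp [hs2, catSolo, hasR_mk, Prod.ext_iff] at hRn
          right; omega
        · simp [hs3, hasR_mk, Prod.ext_iff] at hRn
          rcases hRn with rfl | rfl
          · left; left; rfl
          · right; omega
        · rcases IH.hR s hs n hRn with h | h
          · exact Or.inl (Or.inr h)
          · right; omega
      · -- hobj
        intro s hs n hOn
        simp only [Multiset.mem_cons] at hs
        simp only [Pi.names, Finset.mem_insert]
        rcases hs with rfl | rfl | rfl | hs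
        · simp [hs1, objOcc_mk] at hOn
          rcases hOn with rfl | rfl | rfl
          · tauto
          · right; left; omega
          · right; left; omega
        · simp [hs2, catSolo, objOcc_mk] at hOn
          rcases hOn with rfl | rfl
          · right; left; omega
          · right; left; omega
        · simp [hs3, objOcc_mk] at hOn
          rcases hOn with rfl | rfl | rfl
          · tauto
          · tauto
          · right; left; omega
        · rcases IH.hobj s hs n hOn with h | h | h
          · tauto
          · right; left; omega
          · right; left; omega
      · -- hsubj
        intro s hs
        simp only [Multiset.mem_cons] at hs
        rcases hs with rfl | rfl | rfl | hs
        · left; rfl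
        · right; simp [hs2, catSolo]; omega
        · right; simp [hs3]; omega
        · rcases IH.hsubj s hs with h | h
          · right; rw [h]; omega
          · right; omega
      · -- hv
        intro s hs hsv
        simp only [Multiset.mem_cons] at hs
        rcases hs with rfl | rfl | rfl | hs
        · rfl
        · exfalso; simp [hs2, catSolo] at hsv; omega
        · exfalso; simp [hs3] at hsv; omega
        · exfalso
          rcases IH.hsubj s hs with h | h <;> omega
      · -- hnd
        intro s hs t ht hdual
        obtain ⟨he, hi⟩ := hdual
        simp only [Multiset.mem_cons] at hs ht
        rcases hs with rfl | rfl | rfl | hs <;> rcases ht with rfl | rfl | rfl | ht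
        · exact hi rfl
        · simp [hs1, hs2, catSolo] at he; try omega
        · simp [hs1, hs3] at he; try omega
        · rcases IH.hsubj t ht with h | h <;> simp [hs1] at he <;> try omega
        · simp [hs1, hs2, catSolo] at he; try omega
        · exact hi rfl
        · simp [hs2, hs3, catSolo] at he; try omega
        · rcases IH.hsubj t ht with h | h <;> simp [hs2, catSolo] at he <;> try omega
        · simp [hs1, hs3] at he; try omega
        · simp [hs2, hs3, catSolo] at he; try omega
        · exact hi rfl
        · rcases IH.hsubj t ht with h | h <;> simp [hs3] at he <;> try omega
        · rcases IH.hsubj s hs with h | h <;> simp [hs1] at he <;> try omega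
        · rcases IH.hsubj s hs with h | h <;> simp [hs2, catSolo] at he <;> try omega
        · rcases IH.hsubj s hs with h | h <;> simp [hs3] at he <;> try omega
        · exact IH.hnd s hs t ht ⟨he, hi⟩
      · -- hr1
        intro y
        have eR : CTerm.Rocc
            ⟨insert c (insert (c+1) (insert (c+2) (insert x (insert (c+3) r.1.bound)))),
              s1 ::ₘ s2 ::ₘ s3 ::ₘ r.1.solos⟩ y =
            cnt s1 y + (cnt s2 y + (cnt s3 y + r.1.Rocc y)) := by
          rw [Rocc_cons, Rocc_cons, Rocc_cons]; rfl
        rw [eR, hs1, hs2, hs3]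
        simp only [catSolo]
        rw [cnt_mk, cnt_mk, cnt_mk]
        simp only [Prod.mk.injEq, reduceCtorEq, and_false, and_true, if_false]
        by_cases h0 : r.1.Rocc y = 0
        · rw [h0]; split_ifs <;> omega
        · have hle := IH.hr1 y
          have h5 : y ≠ x ∧ y ≠ c ∧ y ≠ c+1 ∧ y ≠ c+2 ∧ y ≠ c+3 := by
            rcases IH.hr0 y h0 with h | h
            · have := hbnP y h
              exact ⟨fun hh => hxbn (hh ▸ h), by omega, by omega, by omega, by omega⟩
            · exact ⟨by omega, by omega, by omega, by omega, by omega⟩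
          split_ifs <;> omega
      · -- hr0
        intro y hy
        have eR : CTerm.Rocc
            ⟨insert c (insert (c+1) (insert (c+2) (insert x (insert (c+3) r.1.bound)))),
              s1 ::ₘ s2 ::ₘ s3 ::ₘ r.1.solos⟩ y =
            cnt s1 y + (cnt s2 y + (cnt s3 y + r.1.Rocc y)) := by
          rw [Rocc_cons, Rocc_cons, Rocc_cons]; rfl
        rw [eR, hs1, hs2, hs3] at hy
        simp only [catSolo] at hy
        rw [cnt_mk, cnt_mk, cnt_mk] at hy
        simp only [Prod.mk.injEq, reduceCtorEq, and_false, and_true, if_false] at hy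
        simp only [Pi.bn, Finset.mem_insert]
        by_cases hc0 : y = c ∨ y = c+1 ∨ y = c+2 ∨ y = c+3
        · right; omega
        · by_cases hxy : y = x
          · left; left; exact hxy
          · have hr0' : r.1.Rocc y ≠ 0 := by
              intro h0
              rw [h0] at hy
              push_neg at hc0
              split_ifs at hy <;> omega
            rcases IH.hr0 y hr0' with h | h
            · exact Or.inl (Or.inr h)
            · right; omega
      · -- hac4
        intro s hs n h1 h2
        simp only [Multiset.mem_cons] at hs
        rcases hs with rfl | rfl | rfl | hs
        · exfalso
          simp [hs1, hasS_mk, Prod.ext_iff] at h1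
          simp [hs1, hasR_mk, Prod.ext_iff] at h2
          omega
        · simp [hs2, catSolo]
        · simp [hs3]
        · exact IH.hac4 s hs n h1 h2
      · -- hreach
        intro t ht
        simp only [Multiset.mem_cons] at ht
        rcases ht with rfl | rfl | rfl | ht
        · exact ⟨s1, hm1, rfl, Relation.ReflTransGen.refl⟩
        · exact ⟨s1, hm1, rfl, Relation.ReflTransGen.single ⟨hm1, hm2, ⟨2, rfl⟩⟩⟩
        · exact ⟨s1, hm1, rfl, Relation.ReflTransGen.single ⟨hm1, hm3, ⟨1, rfl⟩⟩⟩
        · obtain ⟨r0, m1, m2, m3⟩ := IH.hreach t ht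
          have hs3r0 : s3.ltS r0 := by rw [Solo.ltS, m2]; exact ⟨2, rfl⟩
          exact ⟨s1, hm1, rfl, Relation.ReflTransGen.head ⟨hm1, hm3, ⟨1, rfl⟩⟩
            (Relation.ReflTransGen.head ⟨hm3, hincl r0 m1, hs3r0⟩ (rtg_mono hincl m3))⟩
      · -- hac3
        intro s hs t ht n h1 h2
        simp only [Multiset.mem_cons] at hs ht
        rcases hs with rfl | rfl | rfl | hs
        · simp [hs1, hasR_mk, Prod.ext_iff] at h1
          rcases ht with rfl | rfl | rfl | ht
          · exact Relation.ReflTransGen.refl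
          · rcases h1 with rfl | rfl
            · exfalso; simp [hs2, catSolo, objOcc_mk] at h2; try omega
            · exact Relation.ReflTransGen.single ⟨hm1, hm2, ⟨2, rfl⟩⟩
          · exfalso; simp [hs3, objOcc_mk] at h2; try omega
          · exfalso
            rcases IH.hobj t ht n h2 with h | h | h
            · have := hnP n h; omega
            · omega
            · omega
        · simp [hs2, catSolo, hasR_mk, Prod.ext_iff] at h1
          rcases ht with rfl | rfl | rfl | ht
          · exfalso; simp [hs1, objOcc_mk] at h2; try omega
          · exact Relation.ReflTransGen.refl
          · exfalso; simp [hs3, objOcc_mk] at h2; try omega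
          · exfalso
            rcases IH.hobj t ht n h2 with h | h | h
            · have := hnP n h; omega
            · omega
            · omega
        · simp [hs3, hasR_mk, Prod.ext_iff] at h1
          rcases ht with rfl | rfl | rfl | ht
          · exfalso; simp [hs1, objOcc_mk] at h2; try omega
          · exfalso; simp [hs2, catSolo, objOcc_mk] at h2; try omega
          · exact Relation.ReflTransGen.refl
          · obtain ⟨r0, m1, m2, m3⟩ := IH.hreach t ht
            have hs3r0 : s3.ltS r0 := by rw [Solo.ltS, m2]; exact ⟨2, rfl⟩
            exact Relation.ReflTransGen.head ⟨hm3, hincl r0 m1, hs3r0⟩ (rtg_mono hincl m3)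
        · have h1R := IH.hR s hs n h1
          rcases ht with rfl | rfl | rfl | ht
          · exfalso
            simp [hs1, objOcc_mk] at h2
            rcases h1R with h | h
            · have := hbnP n h
              rcases h2 with rfl | rfl | rfl
              · exact hubn h
              · omega
              · omega
            · omega
          · exfalso
            simp [hs2, catSolo, objOcc_mk] at h2
            rcases h1R with h | h
            · have := hbnP n h; omega
            · omega
          · exfalso
            simp [hs3, objOcc_mk] at h2
            rcases h1R with h | h
            · have := hbnP n h
              rcases h2 with rfl | rfl | rfl
              · exact hxbn h
              · exact hvbn h
              · omega
            · omega
          · exact rtg_mono hincl (IH.hac3 s hs t ht n h1 h2)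
  | out u x P ih =>
      intro v c hg hd hn hv hvb
      have hgP : P.Good := hg
      simp only [Pi.bn, Pi.fn] at hd hvb
      have hnP : ∀ y ∈ P.names, y < c := fun y hy => hn y (by simp [Pi.names]; tauto)
      have hu : u < c := hn u (by simp [Pi.names])
      have hx : x < c := hn x (by simp [Pi.names])
      have hbnP : ∀ y ∈ P.bn, y < c := fun y hy => hnP y (Pi.bn_subset_names P hy)
      have hubn : u ∉ P.bn := fun h =>
        Finset.disjoint_left.1 hd h (Finset.mem_insert_self u _)
      have hxbn : x ∉ P.bn := fun h =>
        Finset.disjoint_left.1 hd h (Finset.mem_insert.2 (Or.inr (Finset.mem_insert_self x _)))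
      have hvbn : v ∉ P.bn := hvb
      have hd' : Disjoint P.bn P.fn := by
        rw [Finset.disjoint_left]
        intro n hb hf
        exact Finset.disjoint_left.1 hd hb
          (Finset.mem_insert.2 (Or.inr (Finset.mem_insert.2 (Or.inr hf))))
      set r := dtrans P (c+3) (c+4) with hrdef
      have IH : DInv P (c+3) (c+4) r.1 r.2 := ih (c+3) (c+4) hgP hd'
        (fun y hy => by have := hnP y hy; omega) (by omega) (fun h => by have := hbnP _ h; omega)
      have hk4 : c + 4 ≤ r.2 := IH.hk
      set s1 : Solo := ⟨false, v, ![(u, Proto.S), (c, Proto.R), (c+1, Proto.R)]⟩ with hs1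
      set s2 : Solo := catSolo (c+1) (c+2) with hs2
      set s3 : Solo := ⟨false, c, ![(x, Proto.S), (c+3, Proto.R), (v, Proto.S)]⟩ with hs3
      show DInv (Pi.out u x P) v c
        ⟨insert c (insert (c+1) (insert (c+2) (insert (c+3) r.1.bound))),
          s1 ::ₘ s2 ::ₘ s3 ::ₘ r.1.solos⟩ r.2
      have hm1 : s1 ∈ s1 ::ₘ s2 ::ₘ s3 ::ₘ r.1.solos := Multiset.mem_cons_self _ _
      have hm2 : s2 ∈ s1 ::ₘ s2 ::ₘ s3 ::ₘ r.1.solos :=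
        Multiset.mem_cons.2 (Or.inr (Multiset.mem_cons_self _ _))
      have hm3 : s3 ∈ s1 ::ₘ s2 ::ₘ s3 ::ₘ r.1.solos :=
        Multiset.mem_cons.2 (Or.inr (Multiset.mem_cons.2 (Or.inr (Multiset.mem_cons_self _ _))))
      have hincl : ∀ s ∈ r.1.solos, s ∈
          (CTerm.mk (insert c (insert (c+1) (insert (c+2) (insert (c+3) r.1.bound))))
            (s1 ::ₘ s2 ::ₘ s3 ::ₘ r.1.solos)).solos := by
        intro s hs
        exact Multiset.mem_cons.2 (Or.inr (Multiset.mem_cons.2 (Or.inr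
          (Multiset.mem_cons.2 (Or.inr hs)))))
      refine ⟨by omega, ?_, ?_, ?_, ?_, ?_, ?_, ?_, ?_, ?_, ?_, ?_⟩
      · -- hbound
        intro y hy
        simp only [Pi.bn, Finset.mem_insert] at hy ⊢
        rcases hy with h | h
        · have := IH.hbound y (Or.inl h); tauto
        · by_cases hcase : y < c + 4
          · have : y = c ∨ y = c+1 ∨ y = c+2 ∨ y = c+3 := by omega
            tauto
          · have := IH.hbound y (Or.inr ⟨by omega, h.2⟩); tauto
      · -- hR
        intro s hs n hRn
        simp only [Multiset.mem_cons] at hs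
        simp only [Pi.bn]
        rcases hs with rfl | rfl | rfl | hs
        · simp [hs1, hasR_mk, Prod.ext_iff] at hRn
          right; omega
        · simp [hs2, catSolo, hasR_mk, Prod.ext_iff] at hRn
          right; omega
        · simp [hs3, hasR_mk, Prod.ext_iff] at hRn
          right; omega
        · rcases IH.hR s hs n hRn with h | h
          · exact Or.inl h
          · right; omega
      · -- hobj
        intro s hs n hOn
        simp only [Multiset.mem_cons] at hs
        simp only [Pi.names, Finset.mem_insert]
        rcases hs with rfl | rfl | rfl | hs
        · simp [hs1, objOcc_mk] at hOn
          rcases hOn with rfl | rfl | rfl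
          · tauto
          · right; left; omega
          · right; left; omega
        · simp [hs2, catSolo, objOcc_mk] at hOn
          rcases hOn with rfl | rfl
          · right; left; omega
          · right; left; omega
        · simp [hs3, objOcc_mk] at hOn
          rcases hOn with rfl | rfl | rfl
          · tauto
          · right; left; omega
          · tauto
        · rcases IH.hobj s hs n hOn with h | h | h
          · tauto
          · right; left; omega
          · right; left; omega
      · -- hsubj
        intro s hs
        simp only [Multiset.mem_cons] at hs
        rcases hs with rfl | rfl | rfl | hs
        · left; rfl
        · right; simp [hs2, catSolo]; omega
        · right; simp [hs3]; omega
        · rcases IH.hsubj s hs with h | h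
          · right; rw [h]; omega
          · right; omega
      · -- hv
        intro s hs hsv
        simp only [Multiset.mem_cons] at hs
        rcases hs with rfl | rfl | rfl | hs
        · rfl
        · exfalso; simp [hs2, catSolo] at hsv; try omega
        · rfl
        · exfalso
          rcases IH.hsubj s hs with h | h <;> omega
      · -- hnd
        intro s hs t ht hdual
        obtain ⟨he, hi⟩ := hdual
        simp only [Multiset.mem_cons] at hs ht
        rcases hs with rfl | rfl | rfl | hs <;> rcases ht with rfl | rfl | rfl | ht
        · exact hi rfl
        · simp [hs1, hs2, catSolo] at he; try omega
        · simp [hs1, hs3] at he; try omega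
        · rcases IH.hsubj t ht with h | h <;> simp [hs1] at he <;> try omega
        · simp [hs1, hs2, catSolo] at he; try omega
        · exact hi rfl
        · simp [hs2, hs3, catSolo] at he; try omega
        · rcases IH.hsubj t ht with h | h <;> simp [hs2, catSolo] at he <;> try omega
        · simp [hs1, hs3] at he; try omega
        · simp [hs2, hs3, catSolo] at he; try omega
        · exact hi rfl
        · rcases IH.hsubj t ht with h | h <;> simp [hs3] at he <;> try omega
        · rcases IH.hsubj s hs with h | h <;> simp [hs1] at he <;> try omega
        · rcases IH.hsubj s hs with h | h <;> simp [hs2, catSolo] at he <;> try omega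
        · rcases IH.hsubj s hs with h | h <;> simp [hs3] at he <;> try omega
        · exact IH.hnd s hs t ht ⟨he, hi⟩
      · -- hr1
        intro y
        have eR : CTerm.Rocc
            ⟨insert c (insert (c+1) (insert (c+2) (insert (c+3) r.1.bound))),
              s1 ::ₘ s2 ::ₘ s3 ::ₘ r.1.solos⟩ y =
            cnt s1 y + (cnt s2 y + (cnt s3 y + r.1.Rocc y)) := by
          rw [Rocc_cons, Rocc_cons, Rocc_cons]; rfl
        rw [eR, hs1, hs2, hs3]
        simp only [catSolo]
        rw [cnt_mk, cnt_mk, cnt_mk]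
        simp only [Prod.mk.injEq, reduceCtorEq, and_false, and_true, if_false]
        by_cases h0 : r.1.Rocc y = 0
        · rw [h0]; split_ifs <;> omega
        · have hle := IH.hr1 y
          have h5 : y ≠ c ∧ y ≠ c+1 ∧ y ≠ c+2 ∧ y ≠ c+3 := by
            rcases IH.hr0 y h0 with h | h
            · have := hbnP y h
              exact ⟨by omega, by omega, by omega, by omega⟩
            · exact ⟨by omega, by omega, by omega, by omega⟩
          split_ifs <;> omega
      · -- hr0
        intro y hy
        have eR : CTerm.Rocc
            ⟨insert c (insert (c+1) (insert (c+2) (insert (c+3) r.1.bound))),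
              s1 ::ₘ s2 ::ₘ s3 ::ₘ r.1.solos⟩ y =
            cnt s1 y + (cnt s2 y + (cnt s3 y + r.1.Rocc y)) := by
          rw [Rocc_cons, Rocc_cons, Rocc_cons]; rfl
        rw [eR, hs1, hs2, hs3] at hy
        simp only [catSolo] at hy
        rw [cnt_mk, cnt_mk, cnt_mk] at hy
        simp only [Prod.mk.injEq, reduceCtorEq, and_false, and_true, if_false] at hy
        simp only [Pi.bn]
        by_cases hc0 : y = c ∨ y = c+1 ∨ y = c+2 ∨ y = c+3
        · right; omega
        · have hr0' : r.1.Rocc y ≠ 0 := by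
            intro h0
            rw [h0] at hy
            push_neg at hc0
            split_ifs at hy <;> omega
          rcases IH.hr0 y hr0' with h | h
          · exact Or.inl h
          · right; omega
      · -- hac4
        intro s hs n h1 h2
        simp only [Multiset.mem_cons] at hs
        rcases hs with rfl | rfl | rfl | hs
        · exfalso
          simp [hs1, hasS_mk, Prod.ext_iff] at h1
          simp [hs1, hasR_mk, Prod.ext_iff] at h2
          omega
        · simp [hs2, catSolo]
        · exfalso
          simp [hs3, hasS_mk, Prod.ext_iff] at h1
          simp [hs3, hasR_mk, Prod.ext_iff] at h2
          rcases h1 with rfl | rfl <;> omega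
        · exact IH.hac4 s hs n h1 h2
      · -- hreach
        intro t ht
        simp only [Multiset.mem_cons] at ht
        rcases ht with rfl | rfl | rfl | ht
        · exact ⟨s1, hm1, rfl, Relation.ReflTransGen.refl⟩
        · exact ⟨s1, hm1, rfl, Relation.ReflTransGen.single ⟨hm1, hm2, ⟨2, rfl⟩⟩⟩
        · exact ⟨s1, hm1, rfl, Relation.ReflTransGen.single ⟨hm1, hm3, ⟨1, rfl⟩⟩⟩
        · obtain ⟨r0, m1, m2, m3⟩ := IH.hreach t ht
          have hs3r0 : s3.ltS r0 := by rw [Solo.ltS, m2]; exact ⟨1, rfl⟩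
          exact ⟨s1, hm1, rfl, Relation.ReflTransGen.head ⟨hm1, hm3, ⟨1, rfl⟩⟩
            (Relation.ReflTransGen.head ⟨hm3, hincl r0 m1, hs3r0⟩ (rtg_mono hincl m3))⟩
      · -- hac3
        intro s hs t ht n h1 h2
        simp only [Multiset.mem_cons] at hs ht
        rcases hs with rfl | rfl | rfl | hs
        · simp [hs1, hasR_mk, Prod.ext_iff] at h1
          rcases ht with rfl | rfl | rfl | ht
          · exact Relation.ReflTransGen.refl
          · rcases h1 with rfl | rfl
            · exfalso; simp [hs2, catSolo, objOcc_mk] at h2; try omega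
            · exact Relation.ReflTransGen.single ⟨hm1, hm2, ⟨2, rfl⟩⟩
          · exfalso; simp [hs3, objOcc_mk] at h2; try omega
          · exfalso
            rcases IH.hobj t ht n h2 with h | h | h
            · have := hnP n h; omega
            · omega
            · omega
        · simp [hs2, catSolo, hasR_mk, Prod.ext_iff] at h1
          rcases ht with rfl | rfl | rfl | ht
          · exfalso; simp [hs1, objOcc_mk] at h2; try omega
          · exact Relation.ReflTransGen.refl
          · exfalso; simp [hs3, objOcc_mk] at h2; try omega
          · exfalso
            rcases IH.hobj t ht n h2 with h | h | h
            · have := hnP n h; omega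
            · omega
            · omega
        · simp [hs3, hasR_mk, Prod.ext_iff] at h1
          rcases ht with rfl | rfl | rfl | ht
          · exfalso; simp [hs1, objOcc_mk] at h2; try omega
          · exfalso; simp [hs2, catSolo, objOcc_mk] at h2; try omega
          · exact Relation.ReflTransGen.refl
          · obtain ⟨r0, m1, m2, m3⟩ := IH.hreach t ht
            have hs3r0 : s3.ltS r0 := by rw [Solo.ltS, m2]; exact ⟨1, rfl⟩
            exact Relation.ReflTransGen.head ⟨hm3, hincl r0 m1, hs3r0⟩ (rtg_mono hincl m3)
        · have h1R := IH.hR s hs n h1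
          rcases ht with rfl | rfl | rfl | ht
          · exfalso
            simp [hs1, objOcc_mk] at h2
            rcases h1R with h | h
            · have := hbnP n h
              rcases h2 with rfl | rfl | rfl
              · exact hubn h
              · omega
              · omega
            · omega
          · exfalso
            simp [hs2, catSolo, objOcc_mk] at h2
            rcases h1R with h | h
            · have := hbnP n h; omega
            · omega
          · exfalso
            simp [hs3, objOcc_mk] at h2
            rcases h1R with h | h
            · have := hbnP n h
              rcases h2 with rfl | rfl | rfl
              · exact hxbn h
              · omega
              · exact hvbn h
            · omega
          · exact rtg_mono hincl (IH.hac3 s hs t ht n h1 h2)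
  | par P Q ihP ihQ =>
      intro v c hg hd hn hv hvb
      obtain ⟨hgP, hgQ, hPQbn, hPbnQfn, hQbnPfn⟩ := hg
      set a := dtrans P v c with ha
      set b := dtrans Q v a.2 with hb
      show DInv (Pi.par P Q) v c ⟨a.1.bound ∪ b.1.bound, a.1.solos + b.1.solos⟩ b.2
      simp only [Pi.bn, Pi.names, Pi.fn, Finset.disjoint_union_left,
        Finset.disjoint_union_right] at hd hvb hn
      have hnP : ∀ y ∈ P.names, y < c := fun y hy => hn y (Finset.mem_union_left _ hy)
      have hnQ : ∀ y ∈ Q.names, y < c := fun y hy => hn y (Finset.mem_union_right _ hy)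
      have hbnP : ∀ y ∈ P.bn, y < c := fun y hy => hnP y (Pi.bn_subset_names P hy)
      have hbnQ : ∀ y ∈ Q.bn, y < c := fun y hy => hnQ y (Pi.bn_subset_names Q hy)
      have hvbP : v ∉ P.bn := fun h => hvb (Finset.mem_union_left _ h)
      have hvbQ : v ∉ Q.bn := fun h => hvb (Finset.mem_union_right _ h)
      have IHa : DInv P v c a.1 a.2 := ihP v c hgP hd.1.1 hnP hv hvbP
      have IHb : DInv Q v a.2 b.1 b.2 := ihQ v a.2 hgQ hd.2.2
        (fun y hy => lt_of_lt_of_le (hnQ y hy) IHa.hk) (lt_of_lt_of_le hv IHa.hk) hvbQ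
      have hk1 : c ≤ a.2 := IHa.hk
      have hk2 : a.2 ≤ b.2 := IHb.hk
      have hmem : ∀ s : Solo, s ∈ a.1.solos + b.1.solos ↔ s ∈ a.1.solos ∨ s ∈ b.1.solos :=
        fun s => Multiset.mem_add
      have hincla : ∀ s ∈ a.1.solos,
          s ∈ (CTerm.mk (a.1.bound ∪ b.1.bound) (a.1.solos + b.1.solos)).solos :=
        fun s hs => Multiset.mem_add.2 (Or.inl hs)
      have hinclb : ∀ s ∈ b.1.solos,
          s ∈ (CTerm.mk (a.1.bound ∪ b.1.bound) (a.1.solos + b.1.solos)).solos :=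
        fun s hs => Multiset.mem_add.2 (Or.inr hs)
      -- cross facts: an R-name of one side is never an object name of the other
      have hcross1 : ∀ n, (n ∈ P.bn ∨ (c ≤ n ∧ n < a.2)) →
          (n ∈ Q.names ∨ (a.2 ≤ n ∧ n < b.2) ∨ n = v) → False := by
        rintro n (h1 | h1) (h2 | h2 | rfl)
        · rcases Finset.mem_union.1 (Pi.names_subset_fn_bn Q h2) with h | h
          · exact Finset.disjoint_left.1 hPbnQfn h1 h
          · exact Finset.disjoint_left.1 hPQbn h1 h
        · have := hbnP n h1; omega
        · exact hvbP h1
        · have := hnQ n h2; omega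
        · omega
        · omega
      have hcross2 : ∀ n, (n ∈ Q.bn ∨ (a.2 ≤ n ∧ n < b.2)) →
          (n ∈ P.names ∨ (c ≤ n ∧ n < a.2) ∨ n = v) → False := by
        rintro n (h1 | h1) (h2 | h2 | rfl)
        · rcases Finset.mem_union.1 (Pi.names_subset_fn_bn P h2) with h | h
          · exact Finset.disjoint_left.1 hQbnPfn h1 h
          · exact Finset.disjoint_left.1 hPQbn.symm h1 h
        · have := hbnQ n h1; omega
        · exact hvbQ h1
        · have := hnP n h2; omega
        · omega
        · omega
      refine ⟨le_trans hk1 hk2, ?_, ?_, ?_, ?_, ?_, ?_, ?_, ?_, ?_, ?_, ?_⟩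
      · -- hbound
        intro y hy
        simp only [Finset.mem_union]
        rcases hy with hy | hy
        · rcases Finset.mem_union.1 hy with h | h
          · exact Or.inl (IHa.hbound y (Or.inl h))
          · exact Or.inr (IHb.hbound y (Or.inl h))
        · by_cases h : y < a.2
          · exact Or.inl (IHa.hbound y (Or.inr ⟨hy.1, h⟩))
          · exact Or.inr (IHb.hbound y (Or.inr ⟨by omega, hy.2⟩))
      · -- hR
        intro s hs n hRn
        rcases (hmem s).1 hs with h | h
        · rcases IHa.hR s h n hRn with h2 | h2
          · exact Or.inl (Finset.mem_union_left _ h2)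
          · exact Or.inr ⟨h2.1, by omega⟩
        · rcases IHb.hR s h n hRn with h2 | h2
          · exact Or.inl (Finset.mem_union_right _ h2)
          · exact Or.inr ⟨by omega, h2.2⟩
      · -- hobj
        intro s hs n hOn
        rcases (hmem s).1 hs with h | h
        · rcases IHa.hobj s h n hOn with h2 | h2 | h2
          · exact Or.inl (Finset.mem_union_left _ h2)
          · exact Or.inr (Or.inl ⟨h2.1, by omega⟩)
          · exact Or.inr (Or.inr h2)
        · rcases IHb.hobj s h n hOn with h2 | h2 | h2
          · exact Or.inl (Finset.mem_union_right _ h2)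
          · exact Or.inr (Or.inl ⟨by omega, h2.2⟩)
          · exact Or.inr (Or.inr h2)
      · -- hsubj
        intro s hs
        rcases (hmem s).1 hs with h | h
        · rcases IHa.hsubj s h with h2 | h2
          · exact Or.inl h2
          · exact Or.inr ⟨h2.1, by omega⟩
        · rcases IHb.hsubj s h with h2 | h2
          · exact Or.inl h2
          · exact Or.inr ⟨by omega, h2.2⟩
      · -- hv
        intro s hs hsub
        rcases (hmem s).1 hs with h | h
        · exact IHa.hv s h hsub
        · exact IHb.hv s h hsub
      · -- hnd
        intro s hs t ht hdual
        rcases (hmem s).1 hs with h | h <;> rcases (hmem t).1 ht with h' | h'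
        · exact IHa.hnd s h t h' hdual
        · rcases IHa.hsubj s h with h2 | h2 <;> rcases IHb.hsubj t h' with h3 | h3
          · exact hdual.2 ((IHa.hv s h h2).trans (IHb.hv t h' h3).symm)
          · have := hdual.1; omega
          · have := hdual.1; omega
          · have := hdual.1; omega
        · rcases IHb.hsubj s h with h2 | h2 <;> rcases IHa.hsubj t h' with h3 | h3
          · exact hdual.2 ((IHb.hv s h h2).trans (IHa.hv t h' h3).symm)
          · have := hdual.1; omega
          · have := hdual.1; omega
          · have := hdual.1; omega
        · exact IHb.hnd s h t h' hdual
      · -- hr1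
        intro y
        have e : CTerm.Rocc ⟨a.1.bound ∪ b.1.bound, a.1.solos + b.1.solos⟩ y =
            a.1.Rocc y + b.1.Rocc y := by
          rw [Rocc_add (a.1.bound ∪ b.1.bound) a.1.bound b.1.bound]
        rw [e]
        by_cases h0 : a.1.Rocc y = 0
        · rw [h0]; simpa using IHb.hr1 y
        · by_cases h1 : b.1.Rocc y = 0
          · rw [h1]; simpa using IHa.hr1 y
          · exfalso
            rcases IHa.hr0 y h0 with h2 | h2 <;> rcases IHb.hr0 y h1 with h3 | h3
            · exact Finset.disjoint_left.1 hPQbn h2 h3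
            · have := hbnP y h2; omega
            · have := hbnQ y h3; omega
            · omega
      · -- hr0
        intro y hy
        have e : CTerm.Rocc ⟨a.1.bound ∪ b.1.bound, a.1.solos + b.1.solos⟩ y =
            a.1.Rocc y + b.1.Rocc y := by
          rw [Rocc_add (a.1.bound ∪ b.1.bound) a.1.bound b.1.bound]
        rw [e] at hy
        by_cases h0 : a.1.Rocc y = 0
        · rcases IHb.hr0 y (by omega) with h | h
          · exact Or.inl (Finset.mem_union_right _ h)
          · exact Or.inr ⟨by omega, h.2⟩
        · rcases IHa.hr0 y h0 with h | h
          · exact Or.inl (Finset.mem_union_left _ h)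
          · exact Or.inr ⟨h.1, by omega⟩
      · -- hac4
        intro s hs n h1 h2
        rcases (hmem s).1 hs with h | h
        · exact IHa.hac4 s h n h1 h2
        · exact IHb.hac4 s h n h1 h2
      · -- hreach
        intro t ht
        rcases (hmem t).1 ht with h | h
        · obtain ⟨r0, m1, m2, m3⟩ := IHa.hreach t h
          exact ⟨r0, hincla r0 m1, m2, rtg_mono hincla m3⟩
        · obtain ⟨r0, m1, m2, m3⟩ := IHb.hreach t h
          exact ⟨r0, hinclb r0 m1, m2, rtg_mono hinclb m3⟩
      · -- hac3
        intro s hs t ht n h1 h2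
        rcases (hmem s).1 hs with h | h <;> rcases (hmem t).1 ht with h' | h'
        · exact rtg_mono hincla (IHa.hac3 s h t h' n h1 h2)
        · exact absurd (IHb.hobj t h' n h2) (by intro hh; exact hcross1 n (IHa.hR s h n h1) hh)
        · exact absurd (IHa.hobj t h' n h2) (by intro hh; exact hcross2 n (IHb.hR s h n h1) hh)
        · exact rtg_mono hinclb (IHb.hac3 s h t h' n h1 h2)
  | nu x P ih =>
      intro v c hg hd hn hv hvb
      have hE : dtrans (Pi.nu x P) v c =
          (⟨insert x (dtrans P v c).1.bound, (dtrans P v c).1.solos⟩, (dtrans P v c).2) := rfl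
      rw [hE]
      have hd' : Disjoint P.bn P.fn := by
        rw [Finset.disjoint_left]
        intro n hb hf
        have hnx : n ≠ x := fun h => hg.2 (h ▸ hb)
        exact Finset.disjoint_left.1 hd (Finset.mem_insert.2 (Or.inr hb))
          (Finset.mem_erase.2 ⟨hnx, hf⟩)
      have hn' : ∀ y ∈ P.names, y < c := fun y hy => hn y (by simp [Pi.names]; tauto)
      have hvb' : v ∉ P.bn := fun h => hvb (by simp [Pi.bn]; tauto)
      have IH := ih v c hg.1 hd' hn' hv hvb'
      have hincl : ∀ s ∈ (dtrans P v c).1.solos,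
          s ∈ (CTerm.mk (insert x (dtrans P v c).1.bound) (dtrans P v c).1.solos).solos :=
        fun s hs => hs
      refine ⟨IH.hk, ?_, ?_, ?_, IH.hsubj, IH.hv, IH.hnd, ?_, ?_, IH.hac4, ?_, ?_⟩
      · intro y hy
        simp only [Pi.bn, Finset.mem_insert] at hy ⊢
        rcases hy with (rfl | h) | h
        · exact Or.inl rfl
        · exact Or.inr (IH.hbound y (Or.inl h))
        · exact Or.inr (IH.hbound y (Or.inr h))
      · intro s hs n hn2
        rcases IH.hR s hs n hn2 with h | h
        · exact Or.inl (by simp [Pi.bn]; tauto)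
        · exact Or.inr h
      · intro s hs n hn2
        rcases IH.hobj s hs n hn2 with h | h
        · exact Or.inl (by simp [Pi.names]; right; exact h)
        · exact Or.inr h
      · intro y; exact IH.hr1 y
      · intro y hy
        rcases IH.hr0 y hy with h | h
        · exact Or.inl (by simp [Pi.bn]; tauto)
        · exact Or.inr h
      · intro t ht
        obtain ⟨r0, h1, h2, h3⟩ := IH.hreach t ht
        exact ⟨r0, h1, h2, rtg_mono hincl h3⟩
      · intro s hs t ht n h1 h2
        exact rtg_mono hincl (IH.hac3 s hs t ht n h1 h2)

/-- Acyclicity for the π-calculus: for every finitary monadic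
π-term `P` (with suitably distinct names), the translation
`⟦P⟧ = (νv)(⟦P⟧_v | C(v))` is an acyclic solos term, i.e. it satisfies
conditions (AC1)–(AC5). -/
theorem stmt17 (P : Pi) (c : ℕ) (hg : P.Good) (hbf : Disjoint P.bn P.fn)
    (hc : ∀ x ∈ P.names, x < c) :
    Acyclic (dtransTop P c) := by
  have hbnP : ∀ y ∈ P.bn, y < c := fun y hy => hc y (Pi.bn_subset_names P hy)
  set a := dtrans P c (c+2) with ha
  have IH : DInv P c (c+2) a.1 a.2 :=
    dinv_dtrans P c (c+2) hg hbf (fun y hy => by have := hc y hy; omega) (by omega)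
      (fun h => absurd (hbnP c h) (lt_irrefl c))
  have hk : c + 2 ≤ a.2 := IH.hk
  set s0 : Solo := catSolo c (c+1) with hs0
  show Acyclic ⟨insert c (insert (c+1) a.1.bound), s0 ::ₘ a.1.solos⟩
  have hincl : ∀ s ∈ a.1.solos,
      s ∈ (CTerm.mk (insert c (insert (c+1) a.1.bound)) (s0 ::ₘ a.1.solos)).solos :=
    fun s hs => Multiset.mem_cons.2 (Or.inr hs)
  have noRv : ∀ s ∈ s0 ::ₘ a.1.solos, ¬ s.hasR c := by
    intro s hs hR
    rcases Multiset.mem_cons.1 hs with rfl | hs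
    · simp [hs0, catSolo, hasR_mk, Prod.ext_iff] at hR
    · rcases IH.hR s hs c hR with h | h
      · exact absurd (hbnP c h) (lt_irrefl c)
      · omega
  refine ⟨?_, ?_, ?_, ?_, ?_⟩
  · -- AC1
    intro y
    have eR : CTerm.Rocc ⟨insert c (insert (c+1) a.1.bound), s0 ::ₘ a.1.solos⟩ y =
        cnt s0 y + a.1.Rocc y := by
      rw [Rocc_cons]; rfl
    show CTerm.Rocc _ y ≤ 1
    rw [eR, hs0]
    simp only [catSolo]
    rw [cnt_mk]
    simp only [Prod.mk.injEq, reduceCtorEq, and_false, and_true, if_false]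
    by_cases hy : y = c + 1
    · have h0 : a.1.Rocc y = 0 := by
        by_contra h
        rcases IH.hr0 y h with h | h
        · have := hbnP y h; omega
        · omega
      rw [h0]; split_ifs <;> omega
    · have := IH.hr1 y; split_ifs <;> omega
  · -- AC2
    intro s hs t ht hdual
    rcases Multiset.mem_cons.1 hs with hs' | hs' <;> rcases Multiset.mem_cons.1 ht with ht' | ht'
    · exact absurd (hs' ▸ ht' ▸ rfl : s.inp = t.inp) hdual.2
    · subst hs'
      have hts : t.subj = c := by have := hdual.1; simpa [hs0, catSolo] using this.symm
      constructor <;> intro t' ht' hlt <;> refine noRv t' ht' ?_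
      · simpa [hs0, catSolo, Solo.ltS] using hlt
      · rw [Solo.ltS, hts] at hlt; exact hlt
    · subst ht'
      have hss : s.subj = c := by have := hdual.1; simpa [hs0, catSolo] using this
      constructor <;> intro t' ht' hlt <;> refine noRv t' ht' ?_
      · rw [Solo.ltS, hss] at hlt; exact hlt
      · simpa [hs0, catSolo, Solo.ltS] using hlt
    · exact absurd hdual (IH.hnd s hs' t ht')
  · -- AC3
    intro s hs t ht n h1 h2
    rcases Multiset.mem_cons.1 hs with rfl | hs' <;> rcases Multiset.mem_cons.1 ht with rfl | ht'
    · exact Relation.ReflTransGen.refl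
    · exfalso
      simp [hs0, catSolo, hasR_mk, Prod.ext_iff] at h1
      rcases IH.hobj t ht' n h2 with h | h | h
      · have := hc n h; omega
      · omega
      · omega
    · exfalso
      simp [hs0, catSolo, objOcc_mk] at h2
      rcases IH.hR s hs' n h1 with h | h
      · have := hbnP n h; omega
      · omega
    · exact rtg_mono hincl (IH.hac3 s hs' t ht' n h1 h2)
  · -- AC4
    intro s hs n h1 h2
    rcases Multiset.mem_cons.1 hs with rfl | hs'
    · simp [hs0, catSolo]
    · exact IH.hac4 s hs' n h1 h2
  · -- AC5
    intro y hyb s hs hR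
    rcases Multiset.mem_cons.1 hs with rfl | hs'
    · simp [hs0, catSolo, hasR_mk, Prod.ext_iff] at hR
      subst hR
      exact hyb (Finset.mem_insert.2 (Or.inr (Finset.mem_insert_self _ _)))
    · rcases IH.hR s hs' y hR with h | h
      · exact hyb (Finset.mem_insert.2 (Or.inr (Finset.mem_insert.2
          (Or.inr (IH.hbound y (Or.inl h))))))
      · exact hyb (Finset.mem_insert.2 (Or.inr (Finset.mem_insert.2
          (Or.inr (IH.hbound y (Or.inr (by omega)))))))
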